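/- (Example, field (11) of the paper.) Define v : ℝ³ → ℍ by v x = i + j if x ∈ (−1,1)³ and x₁ ≥ 0, v x = j if x ∈ (−1,1)³ and x₁ < 0, and v x = 0 otherwise, where i, j, k are the imaginary quaternion units. Take the outer rotation by angle π/2 about the axis j, i.e. q = exp((π/4) • j), and let C = ∫ star (q * v x * star q) * v x dx be the geometric cross correlation at the origin. Then re C = 8 and ‖im C‖ = 4 * Real.sqrt 3, so the detected rotation angle is Real.arccos (re C / ‖C‖) = Real.arctan (Real.sqrt 3 / 2), which is not the true angle π/2; moreover im C is not a real scalar multiple of j, so the detected rotation plane is not the true plane of rotation. -/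

import Mathlib

open Quaternion MeasureTheory

noncomputable instance : MeasurableSpace ℍ[ℝ] := borel _
instance : BorelSpace ℍ[ℝ] := ⟨rfl⟩

/-- The imaginary quaternion unit `i` (corresponding to `e₁`). -/
def iQ : ℍ[ℝ] := ⟨0, 1, 0, 0⟩

/-- The imaginary quaternion unit `j` (corresponding to `e₂`). -/
def jQ : ℍ[ℝ] := ⟨0, 0, 1, 0⟩

/-- The vector field (11) of the paper: `e₁ + e₂` on the half `x₁ ≥ 0` of the
open cube `(-1,1)³`, `e₂` on the half `x₁ < 0`, and `0` outside the cube. -/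
noncomputable def vField11 (x : EuclideanSpace ℝ (Fin 3)) : ℍ[ℝ] :=
  open Classical in
  if (∀ i, x i ∈ Set.Ioo (-1 : ℝ) 1) then (if 0 ≤ x 0 then iQ + jQ else jQ) else 0

/-- The rotor of the outer rotation by `π/2` about the axis `j`. -/
noncomputable def rotor11 : ℍ[ℝ] := NormedSpace.exp ((Real.pi / 4) • jQ)

/-- The geometric cross correlation at the origin of the rotated copy of the
field (11) with the original field. -/
noncomputable def corr11 : ℍ[ℝ] :=
  ∫ x, star (rotor11 * vField11 x * star rotor11) * vField11 x

lemma jQ_norm : ‖jQ‖ = 1 := by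
  rw [norm_eq_sqrt_real_inner, inner_self]
  rw [normSq_def']; simp [jQ]

lemma rotor11_eq : rotor11 = ⟨Real.sqrt 2 / 2, 0, Real.sqrt 2 / 2, 0⟩ := by
  have hre : ((Real.pi / 4) • jQ).re = 0 := by simp; simp [jQ]
  have hn : ‖(Real.pi / 4) • jQ‖ = Real.pi / 4 := by
    rw [norm_smul, jQ_norm, Real.norm_eq_abs, abs_of_pos (by positivity), mul_one]
  rw [rotor11, Quaternion.exp_of_re_eq_zero _ hre, hn, smul_smul,
    div_mul_cancel₀ _ (by positivity : Real.pi / 4 ≠ 0),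
    Real.cos_pi_div_four, Real.sin_pi_div_four]
  ext <;> simp [← Quaternion.coe_div] <;> simp [jQ]

lemma quatA : star (rotor11 * (iQ + jQ) * star rotor11) * (iQ + jQ) = ⟨1, -1, 1, 1⟩ := by
  have hs : Real.sqrt 2 * Real.sqrt 2 = 2 := Real.mul_self_sqrt (by norm_num)
  ext <;> simp [Quaternion.ext_iff, re_mul, imI_mul, imJ_mul, imK_mul] <;> simp [rotor11_eq, iQ, jQ] <;> nlinarith [hs]

lemma quatB : star (rotor11 * jQ * star rotor11) * jQ = 1 := by
  have hs : Real.sqrt 2 * Real.sqrt 2 = 2 := Real.mul_self_sqrt (by norm_num)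
  ext <;> simp [re_mul, imI_mul, imJ_mul, imK_mul] <;> simp [rotor11_eq, jQ] <;> nlinarith [hs]

def cubeSet (a : Set ℝ) : Set (Fin 3 → ℝ) :=
  Set.univ.pi ![a, Set.Ioo (-1) 1, Set.Ioo (-1) 1]

noncomputable def S1 : Set (EuclideanSpace ℝ (Fin 3)) :=
  (MeasurableEquiv.toLp 2 (Fin 3 → ℝ)).symm ⁻¹' cubeSet (Set.Ico 0 1)
noncomputable def S2 : Set (EuclideanSpace ℝ (Fin 3)) :=
  (MeasurableEquiv.toLp 2 (Fin 3 → ℝ)).symm ⁻¹' cubeSet (Set.Ioo (-1) 0)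

lemma mem_cube (x : EuclideanSpace ℝ (Fin 3)) (a : Set ℝ)
    (ha : a ⊆ Set.Ioo (-1 : ℝ) 1) :
    (MeasurableEquiv.toLp 2 (Fin 3 → ℝ)).symm x ∈ cubeSet a ↔
      (∀ i, x i ∈ Set.Ioo (-1 : ℝ) 1) ∧ x 0 ∈ a := by
  simp only [cubeSet, Set.mem_pi, Set.mem_univ, forall_true_left]
  constructor
  · intro h
    refine ⟨fun i => ?_, h 0⟩
    fin_cases i
    · exact ha (h 0)
    · exact h 1
    · exact h 2
  · rintro ⟨h, h0⟩ i
    fin_cases i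
    · exact h0
    · exact h 1
    · exact h 2

lemma cube_meas (a : Set ℝ) (ha : MeasurableSet a) : MeasurableSet (cubeSet a) := by
  apply MeasurableSet.univ_pi
  intro i; fin_cases i <;> simp [ha, measurableSet_Ioo]

lemma cube_vol (a : Set ℝ) (ha : MeasureTheory.volume a = 1) :
    MeasureTheory.volume (cubeSet a) = 4 := by
  rw [cubeSet, volume_pi_pi, Fin.prod_univ_three]
  simp [ha, Real.volume_Ioo]
  rw [show (1:ℝ)+1 = 2 by norm_num, ENNReal.ofReal_ofNat]
  norm_num

lemma S1_vol : MeasureTheory.volume S1 = 4 := by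
  rw [S1, (EuclideanSpace.volume_preserving_symm_measurableEquiv_toLp (Fin 3)).measure_preimage
    (cube_meas _ measurableSet_Ico).nullMeasurableSet]
  exact cube_vol _ (by simp)

lemma S2_vol : MeasureTheory.volume S2 = 4 := by
  rw [S2, (EuclideanSpace.volume_preserving_symm_measurableEquiv_toLp (Fin 3)).measure_preimage
    (cube_meas _ measurableSet_Ioo).nullMeasurableSet]
  refine cube_vol _ ?_
  rw [Real.volume_Ioo]; norm_num

lemma S1_meas : MeasurableSet S1 :=
  (MeasurableEquiv.toLp 2 (Fin 3 → ℝ)).symm.measurable (cube_meas _ measurableSet_Ico)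
lemma S2_meas : MeasurableSet S2 :=
  (MeasurableEquiv.toLp 2 (Fin 3 → ℝ)).symm.measurable (cube_meas _ measurableSet_Ioo)

lemma integrand_eq (A B : ℍ[ℝ])
    (f : EuclideanSpace ℝ (Fin 3) → ℍ[ℝ])
    (hf : ∀ x, f x = if (∀ i, x i ∈ Set.Ioo (-1 : ℝ) 1) then (if 0 ≤ x 0 then A else B) else 0) :
    f = fun x => S1.indicator (fun _ => A) x + S2.indicator (fun _ => B) x := by
  funext x
  rw [hf]
  have h1 : x ∈ S1 ↔ (∀ i, x i ∈ Set.Ioo (-1:ℝ) 1) ∧ x 0 ∈ Set.Ico 0 1 :=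
    mem_cube x _ (fun y hy => ⟨by linarith [hy.1], hy.2⟩)
  have h2 : x ∈ S2 ↔ (∀ i, x i ∈ Set.Ioo (-1:ℝ) 1) ∧ x 0 ∈ Set.Ioo (-1) 0 :=
    mem_cube x _ (fun y hy => ⟨hy.1, by linarith [hy.2]⟩)
  by_cases hc : ∀ i, x i ∈ Set.Ioo (-1:ℝ) 1
  · by_cases h0 : 0 ≤ x 0
    · rw [if_pos hc, if_pos h0, Set.indicator_of_mem (h1.2 ⟨hc, ⟨h0, (hc 0).2⟩⟩),
        Set.indicator_of_notMem (fun hx => absurd (h2.1 hx).2.2 (not_lt.2 h0)), add_zero]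
    · rw [if_pos hc, if_neg h0,
        Set.indicator_of_notMem (fun hx => absurd (h1.1 hx).2.1 h0),
        Set.indicator_of_mem (h2.2 ⟨hc, ⟨(hc 0).1, lt_of_not_ge h0⟩⟩), zero_add]
  · rw [if_neg hc, Set.indicator_of_notMem (fun hx => hc (h1.1 hx).1),
      Set.indicator_of_notMem (fun hx => hc (h2.1 hx).1), add_zero]

lemma integral_eq (A B : ℍ[ℝ])
    (f : EuclideanSpace ℝ (Fin 3) → ℍ[ℝ])
    (hf : ∀ x, f x = if (∀ i, x i ∈ Set.Ioo (-1 : ℝ) 1) then (if 0 ≤ x 0 then A else B) else 0) :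
    ∫ x, f x = (4:ℝ) • A + (4:ℝ) • B := by
  have hiA : Integrable (fun x => S1.indicator (fun _ => A) x) :=
    (integrable_indicator_iff S1_meas).2 (integrableOn_const (by rw [S1_vol]; norm_num))
  have hiB : Integrable (fun x => S2.indicator (fun _ => B) x) :=
    (integrable_indicator_iff S2_meas).2 (integrableOn_const (by rw [S2_vol]; norm_num))
  rw [integrand_eq A B f hf, integral_add hiA hiB,
    integral_indicator_const _ S1_meas, integral_indicator_const _ S2_meas, measureReal_def, measureReal_def, S1_vol, S2_vol]
  norm_num

lemma corr11_eq : corr11 = ⟨8, -4, 4, 4⟩ := by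
  rw [corr11, integral_eq (⟨1,-1,1,1⟩ : ℍ[ℝ]) 1]
  · set L : ℍ[ℝ] := ⟨1, -1, 1, 1⟩ with hL
    clear_value L
    ext <;> simp <;> simp [hL] <;> norm_num
  · intro x
    rw [vField11]
    by_cases hc : ∀ i, x i ∈ Set.Ioo (-1 : ℝ) 1
    · by_cases h0 : 0 ≤ x 0
      · simp only [if_pos hc, if_pos h0]
        refine quatA.trans ?_; exact (if_pos (by simpa using h0)).symm
      · simp only [if_pos hc, if_neg h0]
        convert quatB using 1; exact if_neg (by simpa using h0)
    · simp only [if_neg hc]; simp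

lemma quat_norm (a : ℍ[ℝ]) : ‖a‖ = Real.sqrt (a.1^2 + a.2^2 + a.3^2 + a.4^2) := by
  rw [norm_eq_sqrt_real_inner, inner_self, normSq_def']

/-- Example, field (11): the geometric correlation with the copy rotated by
`π/2` about the axis `j` has scalar part `8` and bivector part of norm
`4√3`, so the detected angle `arctan (√3/2)` is not the true angle `π/2`,
and the detected rotation plane (the bivector part) is not a real scalar
multiple of `j`, i.e. not the true plane of rotation. -/
theorem example_field11_detects_wrong_plane_and_angle :
    corr11.re = 8 ∧ ‖corr11.im‖ = 4 * Real.sqrt 3 ∧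
      Real.arccos (corr11.re / ‖corr11‖) = Real.arctan (Real.sqrt 3 / 2) ∧
      Real.arctan (Real.sqrt 3 / 2) ≠ Real.pi / 2 ∧
      ¬∃ t : ℝ, corr11.im = t • jQ := by
  have h3 : Real.sqrt 3 ^ 2 = 3 := Real.sq_sqrt (by norm_num)
  have h7 : Real.sqrt 7 ^ 2 = 7 := Real.sq_sqrt (by norm_num)
  have h7pos : (0:ℝ) < Real.sqrt 7 := Real.sqrt_pos.2 (by norm_num)
  have himeq : corr11.im = (⟨(0:ℝ),-4,4,4⟩ : ℍ[ℝ]) := by rw [corr11_eq]; rfl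
  have him : ‖corr11.im‖ = 4 * Real.sqrt 3 := by
    rw [quat_norm, himeq]; dsimp only
    rw [show ((0:ℝ)^2 + (-4:ℝ)^2 + (4:ℝ)^2 + (4:ℝ)^2) = (4 * Real.sqrt 3)^2 by nlinarith]
    exact Real.sqrt_sq (by positivity)
  have hnorm : ‖corr11‖ = 4 * Real.sqrt 7 := by
    rw [quat_norm, corr11_eq]; dsimp only
    rw [show ((8:ℝ)^2 + (-4:ℝ)^2 + (4:ℝ)^2 + (4:ℝ)^2) = (4 * Real.sqrt 7)^2 by nlinarith]
    exact Real.sqrt_sq (by positivity)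
  have hre : corr11.re = 8 := by rw [corr11_eq]
  refine ⟨hre, him, ?_, ?_, ?_⟩
  · rw [hre, hnorm]
    have hx : (8:ℝ) / (4 * Real.sqrt 7) = 2 / Real.sqrt 7 := by
      field_simp; ring
    rw [hx, Real.arccos_eq_arctan (by positivity)]
    congr 1
    rw [show (1:ℝ) - (2 / Real.sqrt 7)^2 = 3/7 by rw [div_pow, h7]; norm_num]
    rw [show (3:ℝ)/7 = (Real.sqrt 3 / Real.sqrt 7)^2 by rw [div_pow, h3, h7]]
    rw [Real.sqrt_sq (by positivity)]
    field_simp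
  · exact ne_of_lt (Real.arctan_lt_pi_div_two _)
  · rintro ⟨t, ht⟩
    rw [himeq] at ht
    have h1 := congrArg QuaternionAlgebra.imI ht
    simp at h1; simp [jQ] at h1
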